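/- Let D and W be diagonal n×n positive semidefinite matrices and A ∈ ℝ^{n×d} such that (1/2) Aᵀ D A ⪯ Aᵀ W A ⪯ 2 Aᵀ D A. Then for every row aᵢ of A, aᵢᵀ (Aᵀ W A)^† aᵢ ≤ 2 aᵢᵀ (Aᵀ D A)^† aᵢ. -/

import Mathlib

open Matrix

/-- `B` is the Moore–Penrose pseudoinverse of `M` (Penrose conditions). -/
def IsMPInv {d : ℕ} (M B : Matrix (Fin d) (Fin d) ℝ) : Prop :=
  M * B * M = M ∧ B * M * B = B ∧ (M * B)ᵀ = M * B ∧ (B * M)ᵀ = B * M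

lemma isMPInv_unique {d : ℕ} {M B1 B2 : Matrix (Fin d) (Fin d) ℝ}
    (h1 : IsMPInv M B1) (h2 : IsMPInv M B2) : B1 = B2 := by
  obtain ⟨m1, b1, s1, t1⟩ := h1
  obtain ⟨m2, b2, s2, t2⟩ := h2
  have hA : M * B1 = M * B2 := by
    calc M * B1 = (M * B1)ᵀ := s1.symm
    _ = ((M * B2 * M) * B1)ᵀ := by rw [m2]
    _ = ((M * B2) * (M * B1))ᵀ := by simp only [mul_assoc]
    _ = (M * B1)ᵀ * (M * B2)ᵀ := by rw [transpose_mul]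
    _ = (M * B1) * (M * B2) := by rw [s1, s2]
    _ = (M * B1 * M) * B2 := by simp only [mul_assoc]
    _ = M * B2 := by rw [m1]
  have hB : B1 * M = B2 * M := by
    calc B1 * M = (B1 * M)ᵀ := t1.symm
    _ = (B1 * (M * B2 * M))ᵀ := by rw [m2]
    _ = ((B1 * M) * (B2 * M))ᵀ := by simp only [mul_assoc]
    _ = (B2 * M)ᵀ * (B1 * M)ᵀ := by rw [transpose_mul]
    _ = (B2 * M) * (B1 * M) := by rw [t1, t2]
    _ = B2 * (M * B1 * M) := by simp only [mul_assoc]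
    _ = B2 * M := by rw [m1]
  calc B1 = B1 * M * B1 := b1.symm
  _ = B1 * (M * B2) := by rw [mul_assoc, hA]
  _ = (B2 * M) * B2 := by rw [← mul_assoc, hB]
  _ = B2 := b2

lemma isMPInv_symm {d : ℕ} {M B : Matrix (Fin d) (Fin d) ℝ}
    (hM : Mᵀ = M) (h : IsMPInv M B) : Bᵀ = B := by
  obtain ⟨m1, b1, s1, t1⟩ := h
  have hT : IsMPInv M Bᵀ := by
    refine ⟨?_, ?_, ?_, ?_⟩
    · conv_lhs => rw [← hM]
      have e : Mᵀ * Bᵀ * Mᵀ = (M * B * M)ᵀ := by simp only [transpose_mul, mul_assoc]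
      rw [e, m1]; exact hM
    · conv_lhs => rw [← hM]
      have e : Bᵀ * Mᵀ * Bᵀ = (B * M * B)ᵀ := by simp only [transpose_mul, mul_assoc]
      rw [e, b1]
    · conv_lhs => rw [← hM]
      conv_rhs => rw [← hM]
      rw [← transpose_mul, transpose_transpose]
      exact t1.symm
    · conv_lhs => rw [← hM]
      conv_rhs => rw [← hM]
      rw [← transpose_mul, transpose_transpose]
      exact s1.symm
  exact isMPInv_unique hT ⟨m1, b1, s1, t1⟩

lemma mulVec_dp {m k : ℕ} (P : Matrix (Fin m) (Fin k) ℝ) (v : Fin k → ℝ) (w : Fin m → ℝ) :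
    (P *ᵥ v) ⬝ᵥ w = v ⬝ᵥ (Pᵀ *ᵥ w) := by
  rw [Matrix.dotProduct_mulVec, Matrix.vecMul_transpose]

lemma psd_form {n d : ℕ} (A : Matrix (Fin n) (Fin d) ℝ) (dvec : Fin n → ℝ)
    (hd : ∀ i, 0 ≤ dvec i) (x : Fin d → ℝ) :
    0 ≤ x ⬝ᵥ (Aᵀ * Matrix.diagonal dvec * A) *ᵥ x := by
  have e : (Aᵀ * Matrix.diagonal dvec * A) *ᵥ x
      = Aᵀ *ᵥ (Matrix.diagonal dvec *ᵥ (A *ᵥ x)) := by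
    simp [Matrix.mulVec_mulVec, Matrix.mul_assoc]
  rw [e, ← mulVec_dp]
  simp only [dotProduct, Matrix.mulVec_diagonal]
  exact Finset.sum_nonneg fun j _ => by nlinarith [hd j, sq_nonneg ((A *ᵥ x) j)]

theorem sparsifier_leverage {n d : ℕ} (A : Matrix (Fin n) (Fin d) ℝ)
    (dvec wvec : Fin n → ℝ) (hd : ∀ i, 0 ≤ dvec i) (hw : ∀ i, 0 ≤ wvec i)
    (hlow : (Aᵀ * Matrix.diagonal wvec * A
      - (1 / 2 : ℝ) • (Aᵀ * Matrix.diagonal dvec * A)).PosSemidef)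
    (hhigh : ((2 : ℝ) • (Aᵀ * Matrix.diagonal dvec * A)
      - Aᵀ * Matrix.diagonal wvec * A).PosSemidef)
    (BD BW : Matrix (Fin d) (Fin d) ℝ)
    (hBD : IsMPInv (Aᵀ * Matrix.diagonal dvec * A) BD)
    (hBW : IsMPInv (Aᵀ * Matrix.diagonal wvec * A) BW)
    (i : Fin n)
    (hrange : ∃ z : Fin d → ℝ, (Aᵀ * Matrix.diagonal dvec * A).mulVec z = A i) :
    A i ⬝ᵥ BW.mulVec (A i) ≤ 2 * (A i ⬝ᵥ BD.mulVec (A i)) := by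
  set M := Aᵀ * Matrix.diagonal dvec * A with hMdef
  set N := Aᵀ * Matrix.diagonal wvec * A with hNdef
  have hMsym : Mᵀ = M := by
    rw [hMdef]; simp [Matrix.transpose_mul, Matrix.diagonal_transpose, Matrix.mul_assoc]
    
  have hNsym : Nᵀ = N := by
    rw [hNdef]; simp [Matrix.transpose_mul, Matrix.diagonal_transpose, Matrix.mul_assoc]
  have hBWs : BWᵀ = BW := isMPInv_symm hNsym hBW
  have hBDs : BDᵀ = BD := isMPInv_symm hMsym hBD
  set a := A i with hadef
  set y := BW *ᵥ a with hydef
  set u := BD *ᵥ a with hudef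
  -- y ⬝ N y = a ⬝ y
  have h1 : y ⬝ᵥ (N *ᵥ y) = a ⬝ᵥ y := by
    rw [hydef, mulVec_dp, hBWs]
    have : BW *ᵥ (N *ᵥ (BW *ᵥ a)) = (BW * N * BW) *ᵥ a := by
      simp [Matrix.mulVec_mulVec, Matrix.mul_assoc]
    rw [this, hBW.2.1]
  -- M u = a
  have h2 : M *ᵥ u = a := by
    obtain ⟨z, hz⟩ := hrange
    rw [hudef, ← hz]
    calc M *ᵥ (BD *ᵥ (M *ᵥ z)) = (M * BD * M) *ᵥ z := by simp [Matrix.mulVec_mulVec, Matrix.mul_assoc]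
    _ = M *ᵥ z := by rw [hBD.1]
  have hyMu : y ⬝ᵥ (M *ᵥ u) = a ⬝ᵥ y := by rw [h2, dotProduct_comm]
  have huMy : u ⬝ᵥ (M *ᵥ y) = a ⬝ᵥ y := by
    have e := mulVec_dp M u y
    rw [hMsym] at e
    rw [← e, h2]
  have huMu : u ⬝ᵥ (M *ᵥ u) = a ⬝ᵥ u := by rw [h2, dotProduct_comm]
  -- from hlow
  have h3 : 0 ≤ y ⬝ᵥ (N *ᵥ y) - (1/2 : ℝ) * (y ⬝ᵥ (M *ᵥ y)) := by
    have := hlow.dotProduct_mulVec_nonneg y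
    simpa [Matrix.sub_mulVec, Matrix.smul_mulVec, dotProduct_sub,
      dotProduct_smul, smul_eq_mul] using this
  -- completing the square
  have h4 : 0 ≤ (y - (2:ℝ) • u) ⬝ᵥ (M *ᵥ (y - (2:ℝ) • u)) := psd_form A dvec hd _
  have h5 : (y - (2:ℝ) • u) ⬝ᵥ (M *ᵥ (y - (2:ℝ) • u))
      = y ⬝ᵥ (M *ᵥ y) - 2 * (y ⬝ᵥ (M *ᵥ u)) - 2 * (u ⬝ᵥ (M *ᵥ y)) + 4 * (u ⬝ᵥ (M *ᵥ u)) := by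
    simp [Matrix.mulVec_sub, Matrix.mulVec_smul, dotProduct_sub, sub_dotProduct,
      dotProduct_smul, smul_dotProduct, smul_eq_mul]
    ring
  rw [h5] at h4
  rw [h1] at h3
  rw [hyMu, huMy, huMu] at h4
  show a ⬝ᵥ y ≤ 2 * (a ⬝ᵥ u)
  linarith
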